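/- Let P, Q be distinct points of ℝ³ and n a fixed unit vector normal to the segment PQ. Let (D_k), (D'_k) be sequences in ℝ³ \ {0}, and let n_k, n'_k be unit vectors normal to the segments OD_k, OD'_k respectively (O the origin). Let f_k (resp. g_k) be the similarities of ℝ³ mapping P to O and Q to D_k (resp. D'_k), whose orthogonal parts send n to n_k (resp. n'_k). Then f_k⁻¹ ∘ g_k → Id (in the sense of uniform convergence on bounded sets) if and only if |OD_k|/|OD'_k| → 1, ⟨n_k, n'_k⟩ → 1, and the angle ∠D_k O D'_k → 0. -/

import Mathlib

open Filter Metric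
open scoped RealInnerProductSpace

noncomputable section

local notation "E3" => EuclideanSpace ℝ (Fin 3)

lemma aux_inner_one {u : ℕ → E3} {v : E3} (hu : ∀ k, ‖u k‖ = 1) (hv : ‖v‖ = 1) :
    Tendsto (fun k => (inner ℝ v (u k) : ℝ)) atTop (nhds 1) ↔ Tendsto u atTop (nhds v) := by
  constructor
  · intro h
    have hsq : Tendsto (fun k => ‖u k - v‖ ^ 2) atTop (nhds 0) := by
      have heq : ∀ k, ‖u k - v‖ ^ 2 = 2 - 2 * (inner ℝ v (u k) : ℝ) := by
        intro k
        rw [norm_sub_sq_real, hu k, hv, real_inner_comm]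
        ring
      simp only [heq]
      have := (tendsto_const_nhds (x := (2:ℝ))).sub (h.const_mul 2)
      simpa using this
    have hnorm : Tendsto (fun k => ‖u k - v‖) atTop (nhds 0) := by
      have := hsq.sqrt
      simpa [Real.sqrt_sq (norm_nonneg _)] using this
    rwa [tendsto_iff_norm_sub_tendsto_zero]
  · intro h
    have h2 := Filter.Tendsto.inner (𝕜 := ℝ) (tendsto_const_nhds (x := v)) h
    have h1 : (inner ℝ v v : ℝ) = 1 := by rw [real_inner_self_eq_norm_sq, hv]; norm_num
    rw [h1] at h2
    exact h2

lemma aux_third_axis (b : OrthonormalBasis (Fin 3) ℝ E3) (W : ℕ → E3 ≃ₗᵢ[ℝ] E3)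
    (hdet : ∀ k, LinearMap.det ((W k).toLinearEquiv : E3 →ₗ[ℝ] E3) = 1)
    (h0 : Tendsto (fun k => W k (b 0)) atTop (nhds (b 0)))
    (h1 : Tendsto (fun k => W k (b 1)) atTop (nhds (b 1))) :
    Tendsto (fun k => (inner ℝ (b 2) (W k (b 2)) : ℝ)) atTop (nhds 1) := by
  set M : ℕ → Fin 3 → Fin 3 → ℝ := fun k i j => (inner ℝ (b i) (W k (b j)) : ℝ) with hM
  have hb1 : ∀ i, ‖b i‖ = 1 := fun i => b.orthonormal.1 i
  have hbij : ∀ i j, i ≠ j → (inner ℝ (b i) (b j) : ℝ) = 0 := fun i j h => b.orthonormal.2 h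
  -- bound on entries
  have hMb : ∀ k i j, |M k i j| ≤ 1 := by
    intro k i j
    calc |M k i j| ≤ ‖b i‖ * ‖W k (b j)‖ := abs_real_inner_le_norm _ _
    _ = 1 := by rw [hb1, (W k).norm_map, hb1, mul_one]
  -- limits for columns 0 and 1
  have hcol : ∀ (i : Fin 3) (j : Fin 3), (j = 0 ∨ j = 1) →
      Tendsto (fun k => M k i j) atTop (nhds (inner ℝ (b i) (b j) : ℝ)) := by
    intro i j hj
    have hWj : Tendsto (fun k => W k (b j)) atTop (nhds (b j)) := by
      rcases hj with h | h <;> subst h <;> assumption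
    exact Filter.Tendsto.inner (𝕜 := ℝ) tendsto_const_nhds hWj
  -- limits for column 2, rows 0 and 1
  have hrow2 : ∀ (i : Fin 3), (i = 0 ∨ i = 1) →
      Tendsto (fun k => M k i 2) atTop (nhds 0) := by
    intro i hi
    have hWi : Tendsto (fun k => W k (b i)) atTop (nhds (b i)) := by
      rcases hi with h | h <;> subst h <;> assumption
    have key : ∀ k, M k i 2 = (inner ℝ (b i - W k (b i)) (W k (b 2)) : ℝ) := by
      intro k
      have h2 : (inner ℝ (W k (b i)) (W k (b 2)) : ℝ) = 0 := by
        rw [(W k).inner_map_map]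
        exact hbij i 2 (by rcases hi with h | h <;> subst h <;> decide)
      rw [hM]
      simp only [inner_sub_left, h2, sub_zero]
    have hbnd : ∀ k, ‖M k i 2‖ ≤ ‖b i - W k (b i)‖ := by
      intro k
      rw [key k, Real.norm_eq_abs]
      calc |(inner ℝ (b i - W k (b i)) (W k (b 2)) : ℝ)| ≤ ‖b i - W k (b i)‖ * ‖W k (b 2)‖ :=
        abs_real_inner_le_norm _ _
      _ = ‖b i - W k (b i)‖ := by rw [(W k).norm_map, hb1, mul_one]
    have hz : Tendsto (fun k => ‖b i - W k (b i)‖) atTop (nhds 0) := by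
      have := (tendsto_const_nhds (x := b i)).sub hWi
      rw [sub_self] at this
      simpa using this.norm
    exact squeeze_zero_norm hbnd hz
  -- determinant identity
  have hdet' : ∀ k, M k 0 0 * M k 1 1 * M k 2 2 - M k 0 0 * M k 1 2 * M k 2 1
      - M k 0 1 * M k 1 0 * M k 2 2 + M k 0 1 * M k 1 2 * M k 2 0
      + M k 0 2 * M k 1 0 * M k 2 1 - M k 0 2 * M k 1 1 * M k 2 0 = 1 := by
    intro k
    have h := LinearMap.det_toMatrix b.toBasis (((W k).toLinearEquiv : E3 →ₗ[ℝ] E3))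
    rw [hdet k, Matrix.det_fin_three] at h
    have hent : ∀ i j, LinearMap.toMatrix b.toBasis b.toBasis
        (((W k).toLinearEquiv : E3 →ₗ[ℝ] E3)) i j = M k i j := by
      intro i j
      rw [LinearMap.toMatrix_apply, OrthonormalBasis.coe_toBasis,
        OrthonormalBasis.coe_toBasis_repr_apply, OrthonormalBasis.repr_apply_apply]
      simp [hM]
    rw [hent, hent, hent, hent, hent, hent, hent, hent, hent] at h
    linarith [h]
  -- limits of known entries
  have h00 : Tendsto (fun k => M k 0 0) atTop (nhds 1) := by
    have := hcol 0 0 (Or.inl rfl)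
    rwa [show (inner ℝ (b 0) (b 0) : ℝ) = 1 by
      rw [real_inner_self_eq_norm_sq, hb1]; norm_num] at this
  have h11 : Tendsto (fun k => M k 1 1) atTop (nhds 1) := by
    have := hcol 1 1 (Or.inr rfl)
    rwa [show (inner ℝ (b 1) (b 1) : ℝ) = 1 by
      rw [real_inner_self_eq_norm_sq, hb1]; norm_num] at this
  have h10 : Tendsto (fun k => M k 1 0) atTop (nhds 0) := by
    have := hcol 1 0 (Or.inl rfl); rwa [hbij 1 0 (by decide)] at this
  have h01 : Tendsto (fun k => M k 0 1) atTop (nhds 0) := by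
    have := hcol 0 1 (Or.inr rfl); rwa [hbij 0 1 (by decide)] at this
  have h20 : Tendsto (fun k => M k 2 0) atTop (nhds 0) := by
    have := hcol 2 0 (Or.inl rfl); rwa [hbij 2 0 (by decide)] at this
  have h21 : Tendsto (fun k => M k 2 1) atTop (nhds 0) := by
    have := hcol 2 1 (Or.inr rfl); rwa [hbij 2 1 (by decide)] at this
  have h02 : Tendsto (fun k => M k 0 2) atTop (nhds 0) := hrow2 0 (Or.inl rfl)
  have h12 : Tendsto (fun k => M k 1 2) atTop (nhds 0) := hrow2 1 (Or.inr rfl)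
  -- the term with unknown M 2 2 : squeeze
  have ht2 : Tendsto (fun k => M k 0 1 * M k 1 0 * M k 2 2) atTop (nhds 0) := by
    refine squeeze_zero_norm (a := fun k => |M k 0 1|) (fun k => ?_) (by simpa using h01.abs)
    · rw [Real.norm_eq_abs, abs_mul, abs_mul]
      calc |M k 0 1| * |M k 1 0| * |M k 2 2| ≤ |M k 0 1| * 1 * 1 := by
            apply mul_le_mul (mul_le_mul le_rfl (hMb k 1 0) (abs_nonneg _) (abs_nonneg _))
              (hMb k 2 2) (abs_nonneg _) (by positivity)
      _ = |M k 0 1| := by ring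
  -- conclude
  have hs : Tendsto (fun k => M k 0 0 * M k 1 1) atTop (nhds 1) := by
    simpa using h00.mul h11
  have hsg : Tendsto (fun k => M k 0 0 * M k 1 1 * M k 2 2) atTop (nhds 1) := by
    have hrest : Tendsto (fun k => 1 + M k 0 0 * M k 1 2 * M k 2 1
        + M k 0 1 * M k 1 0 * M k 2 2 - M k 0 1 * M k 1 2 * M k 2 0
        - M k 0 2 * M k 1 0 * M k 2 1 + M k 0 2 * M k 1 1 * M k 2 0) atTop (nhds 1) := by
      have := ((((tendsto_const_nhds (x := (1:ℝ))).add ((h00.mul h12).mul h21)).add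
        ht2).sub ((h01.mul h12).mul h20)).sub ((h02.mul h10).mul h21)
      have := this.add ((h02.mul h11).mul h20)
      simpa using this
    apply hrest.congr
    intro k
    linarith [hdet' k]
  have hne : ∀ᶠ k in atTop, M k 0 0 * M k 1 1 ≠ 0 := hs.eventually_ne one_ne_zero
  have hq := hsg.div hs one_ne_zero
  rw [div_one] at hq
  have : Tendsto (fun k => M k 2 2) atTop (nhds 1) := by
    apply hq.congr'
    filter_upwards [hne] with k hk
    simp only [Pi.div_apply]
    rw [mul_comm (M k 0 0 * M k 1 1) (M k 2 2), mul_div_assoc, div_self hk, mul_one]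
  exact this

theorem stmt_14
    (P Q : EuclideanSpace ℝ (Fin 3)) (hPQ : P ≠ Q)
    (n : EuclideanSpace ℝ (Fin 3)) (hn : ‖n‖ = 1) (hnPQ : (inner ℝ n (Q - P) : ℝ) = 0)
    (D D' : ℕ → EuclideanSpace ℝ (Fin 3))
    (hD : ∀ k, D k ≠ 0) (hD' : ∀ k, D' k ≠ 0)
    (nk n'k : ℕ → EuclideanSpace ℝ (Fin 3))
    (hnk : ∀ k, ‖nk k‖ = 1) (hn'k : ∀ k, ‖n'k k‖ = 1)
    (hnkD : ∀ k, (inner ℝ (nk k) (D k) : ℝ) = 0)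
    (hn'kD : ∀ k, (inner ℝ (n'k k) (D' k) : ℝ) = 0)
    (f g : ℕ → EuclideanSpace ℝ (Fin 3) → EuclideanSpace ℝ (Fin 3))
    (hf : ∀ k, ∃ lam : ℝ, 0 < lam ∧
      ∃ U : EuclideanSpace ℝ (Fin 3) ≃ₗᵢ[ℝ] EuclideanSpace ℝ (Fin 3),
        LinearMap.det (U.toLinearEquiv : EuclideanSpace ℝ (Fin 3) →ₗ[ℝ] EuclideanSpace ℝ (Fin 3)) = 1 ∧
        U n = nk k ∧ (∀ x, f k x = lam • U (x - P)))
    (hg : ∀ k, ∃ lam : ℝ, 0 < lam ∧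
      ∃ U : EuclideanSpace ℝ (Fin 3) ≃ₗᵢ[ℝ] EuclideanSpace ℝ (Fin 3),
        LinearMap.det (U.toLinearEquiv : EuclideanSpace ℝ (Fin 3) →ₗ[ℝ] EuclideanSpace ℝ (Fin 3)) = 1 ∧
        U n = n'k k ∧ (∀ x, g k x = lam • U (x - P)))
    (hfQ : ∀ k, f k Q = D k) (hgQ : ∀ k, g k Q = D' k) :
    (∀ r : ℝ, 0 < r →
      TendstoUniformlyOn (fun k x => Function.invFun (f k) (g k x)) id atTop
        (closedBall (0 : EuclideanSpace ℝ (Fin 3)) r)) ↔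
    (Tendsto (fun k => ‖D k‖ / ‖D' k‖) atTop (nhds 1) ∧
     Tendsto (fun k => (inner ℝ (nk k) (n'k k) : ℝ)) atTop (nhds 1) ∧
     Tendsto (fun k => InnerProductGeometry.angle (D k) (D' k)) atTop (nhds 0)) := by
  choose lamf hlamf U hUdet hUn hfx using hf
  choose lamg hlamg V hVdet hVn hgx using hg
  set q : E3 := Q - P with hq_def
  have hq0 : q ≠ 0 := sub_ne_zero.mpr (Ne.symm hPQ)
  have hqn : (0:ℝ) < ‖q‖ := norm_pos_iff.mpr hq0
  set e : E3 := ‖q‖⁻¹ • q with he_def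
  have he : ‖e‖ = 1 := norm_smul_inv_norm hq0
  have hne : (inner ℝ n e : ℝ) = 0 := by
    rw [he_def, real_inner_smul_right, hnPQ, mul_zero]
  -- orthonormal basis extending (e, n)
  have horth : Orthonormal ℝ (Set.restrict ({0, 1} : Set (Fin 3)) ![e, n, 0]) := by
    constructor
    · rintro ⟨i, hi⟩
      simp only [Set.mem_insert_iff, Set.mem_singleton_iff] at hi
      rcases hi with rfl | rfl
      · show ‖![e, n, 0] 0‖ = 1
        simpa using he
      · show ‖![e, n, 0] 1‖ = 1
        simpa using hn
    · rintro ⟨i, hi⟩ ⟨j, hj⟩ hij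
      simp only [Set.mem_insert_iff, Set.mem_singleton_iff] at hi hj
      rcases hi with rfl | rfl <;> rcases hj with rfl | rfl
      · exact absurd rfl hij
      · show (inner ℝ (![e, n, 0] 0) (![e, n, 0] 1) : ℝ) = 0
        simpa using (real_inner_comm e n ▸ hne : (inner ℝ e n : ℝ) = 0)
      · show (inner ℝ (![e, n, 0] 1) (![e, n, 0] 0) : ℝ) = 0
        simpa using hne
      · exact absurd rfl hij
  obtain ⟨b, hb⟩ := horth.exists_orthonormalBasis_extension_of_card_eq
    (by simp [finrank_euclideanSpace])
  have hbe : b 0 = e := by simpa using hb 0 (by simp)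
  have hbn : b 1 = n := by simpa using hb 1 (by simp)
  have hbnorm : ∀ i, ‖b i‖ = 1 := fun i => b.orthonormal.1 i
  -- W and a
  set W : ℕ → E3 ≃ₗᵢ[ℝ] E3 := fun k => (V k).trans (U k).symm with hW_def
  have hUW : ∀ k x, U k (W k x) = V k x := by
    intro k x
    simp [hW_def]
  set a : ℕ → ℝ := fun k => lamg k / lamf k with ha_def
  have hapos : ∀ k, 0 < a k := fun k => div_pos (hlamg k) (hlamf k)
  have hWdet : ∀ k, LinearMap.det ((W k).toLinearEquiv : E3 →ₗ[ℝ] E3) = 1 := by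
    intro k
    have hcomp : ((W k).toLinearEquiv : E3 →ₗ[ℝ] E3)
        = ((U k).symm.toLinearEquiv : E3 →ₗ[ℝ] E3) ∘ₗ ((V k).toLinearEquiv : E3 →ₗ[ℝ] E3) := by
      ext x
      simp [hW_def]
    rw [hcomp, LinearMap.det_comp]
    have hsymm : ((U k).symm.toLinearEquiv : E3 →ₗ[ℝ] E3)
        = (((U k).toLinearEquiv).symm : E3 →ₗ[ℝ] E3) := rfl
    rw [hsymm, LinearEquiv.det_coe_symm, hUdet k, hVdet k, inv_one, one_mul]
  -- basic identities
  have hDk : ∀ k, D k = lamf k • U k q := by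
    intro k; rw [← hfQ k, hfx k Q]
  have hD'k : ∀ k, D' k = lamg k • V k q := by
    intro k; rw [← hgQ k, hgx k Q]
  have hDn : ∀ k, ‖D k‖ = lamf k * ‖q‖ := by
    intro k
    rw [hDk k, norm_smul, (U k).norm_map, Real.norm_eq_abs, abs_of_pos (hlamf k)]
  have hD'n : ∀ k, ‖D' k‖ = lamg k * ‖q‖ := by
    intro k
    rw [hD'k k, norm_smul, (V k).norm_map, Real.norm_eq_abs, abs_of_pos (hlamg k)]
  have heq1 : ∀ k, (a k)⁻¹ = ‖D k‖ / ‖D' k‖ := by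
    intro k
    simp only [hDn k, hD'n k, ha_def]
    rw [inv_div, mul_div_mul_right _ _ (ne_of_gt hqn)]
  have hinner_nn : ∀ k, (inner ℝ (nk k) (n'k k) : ℝ) = (inner ℝ n (W k n) : ℝ) := by
    intro k
    rw [← hUn k, ← hVn k, ← hUW k n, LinearIsometryEquiv.inner_map_map]
  have hangle : ∀ k, InnerProductGeometry.angle (D k) (D' k)
      = Real.arccos ((inner ℝ e (W k e) : ℝ)) := by
    intro k
    rw [hDk k, hD'k k, InnerProductGeometry.angle_smul_left_of_pos _ _ (hlamf k),
      InnerProductGeometry.angle_smul_right_of_pos _ _ (hlamg k), ← hUW k q]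
    simp only [InnerProductGeometry.angle, LinearIsometryEquiv.inner_map_map,
      LinearIsometryEquiv.norm_map]
    congr 1
    have h2 : (inner ℝ e (W k e) : ℝ) = ‖q‖⁻¹ * (‖q‖⁻¹ * (inner ℝ q (W k q) : ℝ)) := by
      rw [he_def, (W k).map_smul, real_inner_smul_left, real_inner_smul_right]
    rw [h2]
    field_simp
  have hWnorm1 : ∀ (x : E3) k, ‖x‖ = 1 → ‖W k x‖ = 1 := by
    intro x k hx; rw [(W k).norm_map, hx]
  -- inverse formula
  have hinv_eq : ∀ k x, Function.invFun (f k) (g k x) = P + a k • W k (x - P) := by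
    intro k x
    have hinj : Function.Injective (f k) := by
      intro y z hyz
      rw [hfx k y, hfx k z] at hyz
      have h2 := smul_right_injective E3 (ne_of_gt (hlamf k)) hyz
      have h3 := (U k).injective h2
      exact sub_left_injective h3
    have hfeq : f k (P + a k • W k (x - P)) = g k x := by
      rw [hfx k _, hgx k x, add_sub_cancel_left, (U k).map_smul, hUW k (x - P), smul_smul]
      congr 1
      show lamf k * (lamg k / lamf k) = lamg k
      rw [mul_comm, div_mul_cancel₀ _ (ne_of_gt (hlamf k))]
    rw [← hfeq, Function.leftInverse_invFun hinj]
  -- expansion bound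
  have hexp : ∀ k (v : E3), ‖v - W k v‖ ≤ (∑ i : Fin 3, ‖b i - W k (b i)‖) * ‖v‖ := by
    intro k v
    have hrepr : v = ∑ i : Fin 3, (inner ℝ (b i) v : ℝ) • b i := (b.sum_repr' v).symm
    have hsub : v - W k v = ∑ i : Fin 3, (inner ℝ (b i) v : ℝ) • (b i - W k (b i)) := by
      conv_lhs => rw [hrepr]
      rw [map_sum]
      rw [← Finset.sum_sub_distrib]
      congr 1
      ext i
      rw [(W k).map_smul, smul_sub]
    rw [hsub]
    calc ‖∑ i : Fin 3, (inner ℝ (b i) v : ℝ) • (b i - W k (b i))‖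
        ≤ ∑ i : Fin 3, ‖(inner ℝ (b i) v : ℝ) • (b i - W k (b i))‖ := norm_sum_le _ _
      _ ≤ ∑ i : Fin 3, ‖v‖ * ‖b i - W k (b i)‖ := by
          apply Finset.sum_le_sum
          intro i _
          rw [norm_smul, Real.norm_eq_abs]
          apply mul_le_mul_of_nonneg_right _ (norm_nonneg _)
          calc |(inner ℝ (b i) v : ℝ)| ≤ ‖b i‖ * ‖v‖ := abs_real_inner_le_norm _ _
            _ = ‖v‖ := by rw [hbnorm i, one_mul]
      _ = (∑ i : Fin 3, ‖b i - W k (b i)‖) * ‖v‖ := by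
          rw [← Finset.mul_sum, mul_comm]
  -- the central equivalence
  have key : (∀ r : ℝ, 0 < r →
      TendstoUniformlyOn (fun k x => Function.invFun (f k) (g k x)) id atTop
        (closedBall (0 : E3) r)) ↔
      (Tendsto a atTop (nhds 1) ∧ Tendsto (fun k => W k e) atTop (nhds e)
        ∧ Tendsto (fun k => W k n) atTop (nhds n)) := by
    constructor
    · intro hL
      have hpt : ∀ v : E3, Tendsto (fun k => a k • W k v) atTop (nhds v) := by
        intro v
        have hr : (0:ℝ) < ‖v + P‖ + 1 := by positivity
        have hmem : v + P ∈ closedBall (0 : E3) (‖v + P‖ + 1) := by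
          rw [mem_closedBall, dist_zero_right]
          linarith
        have h1 := (hL _ hr).tendsto_at hmem
        have h2 : Tendsto (fun k => P + a k • W k v) atTop (nhds (v + P)) :=
          h1.congr (fun k => by rw [hinv_eq k (v + P), add_sub_cancel_right])
        have h3 := h2.sub (tendsto_const_nhds (x := P))
        simp only [add_sub_cancel_left, add_sub_cancel_right] at h3
        exact h3
      have ha : Tendsto a atTop (nhds 1) := by
        have h1 := (hpt e).norm
        rw [he] at h1
        exact h1.congr (fun k => by
          rw [norm_smul, (W k).norm_map, he, mul_one, Real.norm_eq_abs, abs_of_pos (hapos k)])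
      have hainv : Tendsto (fun k => (a k)⁻¹) atTop (nhds 1) := by
        have := ha.inv₀ one_ne_zero
        rwa [inv_one] at this
      have hWv : ∀ v : E3, Tendsto (fun k => W k v) atTop (nhds v) := by
        intro v
        have h1 := hainv.smul (hpt v)
        rw [one_smul] at h1
        exact h1.congr (fun k => by rw [inv_smul_smul₀ (ne_of_gt (hapos k))])
      exact ⟨ha, hWv e, hWv n⟩
    · rintro ⟨ha, hWe, hWn⟩
      have hWb : ∀ i, Tendsto (fun k => W k (b i)) atTop (nhds (b i)) := by
        have h0 : Tendsto (fun k => W k (b 0)) atTop (nhds (b 0)) := by rw [hbe]; exact hWe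
        have h1 : Tendsto (fun k => W k (b 1)) atTop (nhds (b 1)) := by rw [hbn]; exact hWn
        have h2 : Tendsto (fun k => W k (b 2)) atTop (nhds (b 2)) := by
          have := aux_third_axis b W hWdet h0 h1
          exact (aux_inner_one (fun k => hWnorm1 (b 2) k (hbnorm 2)) (hbnorm 2)).mp this
        intro i
        fin_cases i <;> assumption
      intro r hr
      rw [Metric.tendstoUniformlyOn_iff]
      intro ε hε
      set C : ℝ := r + ‖P‖ + 1 with hC_def
      have hCpos : (0:ℝ) < C := by positivity
      set c : ℕ → ℝ := fun k => |1 - a k| + ∑ i : Fin 3, ‖b i - W k (b i)‖ with hc_def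
      have hcnn : ∀ k, 0 ≤ c k := by
        intro k
        apply add_nonneg (abs_nonneg _)
        exact Finset.sum_nonneg (fun i _ => norm_nonneg _)
      have hc0 : Tendsto c atTop (nhds 0) := by
        have h1 : Tendsto (fun k => |1 - a k|) atTop (nhds 0) := by
          have := ((tendsto_const_nhds (x := (1:ℝ))).sub ha).abs
          simpa using this
        have h2 : Tendsto (fun k => ∑ i : Fin 3, ‖b i - W k (b i)‖) atTop (nhds 0) := by
          have := tendsto_finset_sum (Finset.univ : Finset (Fin 3))
            (fun i _ => ((tendsto_const_nhds (x := b i)).sub (hWb i)).norm)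
          simpa using this
        simpa using h1.add h2
      have hev : ∀ᶠ k in atTop, c k < ε / C := hc0.eventually_lt_const (by positivity)
      filter_upwards [hev] with k hk
      intro x hx
      rw [hinv_eq k x]
      have hxr : ‖x‖ ≤ r := by rwa [mem_closedBall, dist_zero_right] at hx
      have hxP : ‖x - P‖ ≤ r + ‖P‖ := by
        calc ‖x - P‖ ≤ ‖x‖ + ‖P‖ := norm_sub_le _ _
          _ ≤ r + ‖P‖ := by linarith
      have hkey : ‖(x - P) - a k • W k (x - P)‖ ≤ c k * ‖x - P‖ := by
        have hsplit : (x - P) - a k • W k (x - P)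
            = ((x - P) - W k (x - P)) + (1 - a k) • W k (x - P) := by
          rw [sub_smul, one_smul]
          abel
        rw [hsplit]
        calc ‖((x - P) - W k (x - P)) + (1 - a k) • W k (x - P)‖
            ≤ ‖(x - P) - W k (x - P)‖ + ‖(1 - a k) • W k (x - P)‖ := norm_add_le _ _
          _ ≤ (∑ i : Fin 3, ‖b i - W k (b i)‖) * ‖x - P‖ + |1 - a k| * ‖x - P‖ := by
              apply add_le_add (hexp k (x - P))
              rw [norm_smul, Real.norm_eq_abs, (W k).norm_map]
          _ = c k * ‖x - P‖ := by rw [hc_def]; ring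
      calc dist (id x) (P + a k • W k (x - P)) = ‖(x - P) - a k • W k (x - P)‖ := by
            rw [dist_eq_norm]
            congr 1
            simp only [id]
            abel
        _ ≤ c k * ‖x - P‖ := hkey
        _ ≤ c k * (r + ‖P‖) := mul_le_mul_of_nonneg_left hxP (hcnn k)
        _ ≤ c k * C := by
            apply mul_le_mul_of_nonneg_left _ (hcnn k)
            rw [hC_def]; linarith
        _ < (ε / C) * C := mul_lt_mul_of_pos_right hk hCpos
        _ = ε := div_mul_cancel₀ ε (ne_of_gt hCpos)
  rw [key]
  constructor
  · rintro ⟨ha, hWe, hWn⟩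
    refine ⟨?_, ?_, ?_⟩
    · have := ha.inv₀ one_ne_zero
      rw [inv_one] at this
      exact this.congr (fun k => heq1 k)
    · have h1 := (aux_inner_one (fun k => hWnorm1 n k hn) hn).mpr hWn
      exact h1.congr (fun k => (hinner_nn k).symm)
    · have h1 := (aux_inner_one (fun k => hWnorm1 e k he) he).mpr hWe
      have h2 := (Real.continuous_arccos.tendsto' 1 0 Real.arccos_one).comp h1
      exact h2.congr (fun k => (hangle k).symm)
  · rintro ⟨h1, h2, h3⟩
    have ha : Tendsto a atTop (nhds 1) := by
      have := h1.inv₀ one_ne_zero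
      rw [inv_one] at this
      exact this.congr (fun k => by rw [← heq1 k, inv_inv])
    have hWn : Tendsto (fun k => W k n) atTop (nhds n) := by
      apply (aux_inner_one (fun k => hWnorm1 n k hn) hn).mp
      exact h2.congr (fun k => hinner_nn k)
    have hWe : Tendsto (fun k => W k e) atTop (nhds e) := by
      apply (aux_inner_one (fun k => hWnorm1 e k he) he).mp
      have h4 := (Real.continuous_cos.tendsto' 0 1 Real.cos_zero).comp h3
      apply h4.congr
      intro k
      simp only [Function.comp]
      rw [hangle k, Real.cos_arccos]
      · have := abs_real_inner_le_norm e (W k e)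
        rw [he, hWnorm1 e k he, mul_one] at this
        linarith [abs_le.mp this]
      · have := abs_real_inner_le_norm e (W k e)
        rw [he, hWnorm1 e k he, mul_one] at this
        linarith [abs_le.mp this]
    exact ⟨ha, hWe, hWn⟩

end
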